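/- For every p ≥ 1 and all ζ, α, η, β ∈ Z₂^p with η·α + ζ·β = 1 in ZMod 2, conjugation by the s-rotation with angle π/2 flips the sign of the spinor: (R^ζ_α(π/2))^† · ((−i)^{ν(η,β)} S^η_β) · R^ζ_α(π/2) = −(−i)^{ν(η,β)} S^η_β, where ^† denotes conjugate transpose. -/

import Mathlib

open Matrix

/-- `Z₂^p`, the binary strings of length `p`. -/
abbrev Z2 (p : ℕ) : Type := Fin p → ZMod 2

/-- Inner product of two binary strings, valued in `ZMod 2`. -/
def dotp {p : ℕ} (ζ γ : Z2 p) : ZMod 2 := ∑ i, ζ i * γ i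

/-- `(-1)^x` for `x : ZMod 2`, as a complex number. -/
noncomputable def sgn (x : ZMod 2) : ℂ := if x = 0 then 1 else -1

/-- The spinor `S^ζ_α`: the `2^p × 2^p` complex matrix with `(γ, β)` entry
`(-1)^{ζ·γ}` if `γ = β + α` and `0` otherwise. -/
noncomputable def Spinor {p : ℕ} (ζ α : Z2 p) : Matrix (Z2 p) (Z2 p) ℂ :=
  Matrix.of fun γ β => if γ = β + α then sgn (dotp ζ γ) else 0

/-- `ν(ζ,α)`: the number of indices `i` with `ζ i = 1` and `α i = 1`. -/
def nu {p : ℕ} (ζ α : Z2 p) : ℕ :=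
  (Finset.univ.filter fun i => ζ i = 1 ∧ α i = 1).card

/-- The s-rotation `R^ζ_α(θ) = exp(iθ (-i)^{ν(ζ,α)} S^ζ_α)`. -/
noncomputable def sRot {p : ℕ} (ζ α : Z2 p) (θ : ℝ) : Matrix (Z2 p) (Z2 p) ℂ :=
  NormedSpace.exp ((Complex.I * θ * (-Complex.I) ^ nu ζ α) • Spinor ζ α)

/- ### Auxiliary lemmas -/

lemma zmod2_cases (x : ZMod 2) : x = 0 ∨ x = 1 := by revert x; decide

lemma sgn_zero : sgn 0 = 1 := by simp [sgn]

lemma sgn_one : sgn 1 = -1 := by simp [sgn]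

lemma zmod2_add_self (x : ZMod 2) : x + x = 0 := by revert x; decide

lemma sgn_add (x y : ZMod 2) : sgn (x + y) = sgn x * sgn y := by
  rcases zmod2_cases x with rfl | rfl <;> rcases zmod2_cases y with rfl | rfl <;>
    simp [sgn, (by decide : (1 + 1 : ZMod 2) = 0)]

lemma sgn_mul_self (x : ZMod 2) : sgn x * sgn x = 1 := by
  rcases zmod2_cases x with rfl | rfl <;> simp [sgn]

lemma sgn_eq_neg_of_add_eq_one {a b : ZMod 2} (h : a + b = 1) : sgn a = -sgn b := by
  rcases zmod2_cases a with rfl | rfl <;> rcases zmod2_cases b with rfl | rfl <;>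
    simp_all [sgn, (by decide : (1 + 1 : ZMod 2) = 0)]

lemma dotp_add_left {p : ℕ} (ζ η γ : Z2 p) :
    dotp (ζ + η) γ = dotp ζ γ + dotp η γ := by
  simp [dotp, add_mul, Finset.sum_add_distrib]

lemma dotp_add_right {p : ℕ} (ζ γ δ : Z2 p) :
    dotp ζ (γ + δ) = dotp ζ γ + dotp ζ δ := by
  simp [dotp, mul_add, Finset.sum_add_distrib]

lemma Z2_add_self {p : ℕ} (γ : Z2 p) : γ + γ = 0 :=
  funext fun i => zmod2_add_self (γ i)

lemma Z2_eq_add_iff {p : ℕ} (γ δ α : Z2 p) : γ = δ + α ↔ δ = γ + α := by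
  constructor <;> rintro rfl <;>
    rw [add_assoc, Z2_add_self, add_zero]

lemma dotp_eq_nu_cast {p : ℕ} (ζ α : Z2 p) : dotp ζ α = (nu ζ α : ZMod 2) := by
  unfold dotp nu
  rw [Finset.card_filter]
  push_cast
  refine Finset.sum_congr rfl fun i _ => ?_
  rcases zmod2_cases (ζ i) with h | h <;> rcases zmod2_cases (α i) with h' | h' <;>
    simp [h, h']

lemma sgn_natCast (n : ℕ) : sgn (n : ZMod 2) = (-1 : ℂ) ^ n := by
  induction n with
  | zero => simp [sgn]
  | succ k ih =>
    push_cast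
    rw [sgn_add, ih, sgn_one, pow_succ]

lemma sgn_dotp_self {p : ℕ} (ζ α : Z2 p) : sgn (dotp ζ α) = (-1 : ℂ) ^ nu ζ α := by
  rw [dotp_eq_nu_cast, sgn_natCast]

lemma Spinor_mul {p : ℕ} (ζ α η β : Z2 p) :
    Spinor ζ α * Spinor η β = sgn (dotp η α) • Spinor (ζ + η) (α + β) := by
  ext γ δ
  rw [Matrix.mul_apply, Finset.sum_eq_single (δ + β)]
  · simp only [Spinor, Matrix.of_apply, Matrix.smul_apply, smul_eq_mul, if_true,
      eq_self_iff_true]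
    have hiff : γ = δ + β + α ↔ γ = δ + (α + β) := by
      rw [add_assoc, add_comm β α]
    by_cases hγ : γ = δ + β + α
    · rw [if_pos hγ, if_pos (hiff.mp hγ)]
      have hδβ : δ + β = γ + α := by
        rw [hγ, add_assoc, Z2_add_self, add_zero]
      rw [hδβ, dotp_add_left, dotp_add_right, sgn_add, sgn_add]
      ring
    · rw [if_neg hγ, if_neg (fun hh => hγ (hiff.mpr hh)), zero_mul, mul_zero]
  · intro ε _ hε
    simp only [Spinor, Matrix.of_apply]
    rw [if_neg hε, mul_zero]
  · intro h; exact absurd (Finset.mem_univ _) h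

lemma Spinor_zero_zero {p : ℕ} : (Spinor (0 : Z2 p) 0) = 1 := by
  ext γ δ
  simp only [Spinor, Matrix.of_apply, Matrix.one_apply, add_zero, dotp, zero_mul,
    Finset.sum_const_zero, sgn_zero]
  by_cases h : γ = δ <;> simp [h, eq_comm, sgn_zero]

lemma Spinor_conjTranspose {p : ℕ} (ζ α : Z2 p) :
    (Spinor ζ α)ᴴ = sgn (dotp ζ α) • Spinor ζ α := by
  ext γ δ
  simp only [Matrix.conjTranspose_apply, Spinor, Matrix.of_apply, Matrix.smul_apply,
    smul_eq_mul]
  by_cases h : δ = γ + α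
  · rw [if_pos h, if_pos ((Z2_eq_add_iff δ γ α).mp h)]
    rw [h, dotp_add_right, sgn_add]
    have : ∀ x : ZMod 2, star (sgn x) = sgn x := by
      intro x; rcases zmod2_cases x with rfl | rfl <;> simp [sgn]
    rw [star_mul', this, this]
    ring
  · rw [if_neg h, if_neg (fun hh => h ((Z2_eq_add_iff γ δ α).mp hh)), star_zero, mul_zero]

/-- Exponential of `(x * I) • A` when `A * A = 1`. -/
lemma exp_smul_of_mul_self_eq_one {n : Type*} [Fintype n] [DecidableEq n]
    (A : Matrix n n ℂ) (hA : A * A = 1) (x : ℂ) :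
    NormedSpace.exp ((x * Complex.I) • A) =
      Complex.cos x • 1 + (Complex.sin x * Complex.I) • A := by
  rw [NormedSpace.exp_eq_tsum ℂ]
  refine HasSum.tsum_eq ?_
  have hA2 : A ^ 2 = 1 := by rw [sq, hA]
  refine HasSum.even_add_odd ?_ ?_
  · have hc := (Complex.hasSum_cos x).smul_const (1 : Matrix n n ℂ)
    convert hc using 2 with k
    · rfl
    rw [smul_pow, pow_mul A, hA2, one_pow, smul_smul]
    congr 1
    rw [mul_pow, pow_mul Complex.I, Complex.I_sq]
    field_simp
  · have hs := ((Complex.hasSum_sin x).mul_right Complex.I).smul_const A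
    convert hs using 2 with k
    · rfl
    rw [smul_pow, pow_succ A, pow_mul A, hA2, one_pow, one_mul, smul_smul]
    congr 1
    rw [pow_succ (x * Complex.I), mul_pow, pow_mul Complex.I, Complex.I_sq]
    field_simp
    ring

/-- If `η·α + ζ·β = 1`, conjugation by the s-rotation with angle `π/2` flips the sign. -/
theorem sRot_conj_flip {p : ℕ} (hp : 1 ≤ p) (ζ α η β : Z2 p)
    (h : dotp η α + dotp ζ β = 1) :
    (sRot ζ α (Real.pi / 2))ᴴ * ((-Complex.I) ^ nu η β • Spinor η β) *
        sRot ζ α (Real.pi / 2) =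
      -((-Complex.I) ^ nu η β • Spinor η β) := by
  set A : Matrix (Z2 p) (Z2 p) ℂ := (-Complex.I) ^ nu ζ α • Spinor ζ α with hAdef
  set B : Matrix (Z2 p) (Z2 p) ℂ := (-Complex.I) ^ nu η β • Spinor η β with hBdef
  have hI2 : (-Complex.I) * (-Complex.I) = -1 := by
    simp [Complex.I_mul_I]
  have hAA : A * A = 1 := by
    rw [hAdef, Matrix.smul_mul, Matrix.mul_smul, smul_smul, Spinor_mul, Z2_add_self,
      Z2_add_self, Spinor_zero_zero, smul_smul, sgn_dotp_self]
    have : (-Complex.I) ^ nu ζ α * (-Complex.I) ^ nu ζ α * (-1 : ℂ) ^ nu ζ α = 1 := by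
      rw [← mul_pow, hI2, ← mul_pow]
      norm_num
    rw [this, one_smul]
  -- the rotation equals I • A
  have hR : sRot ζ α (Real.pi / 2) = Complex.I • A := by
    unfold sRot
    have harg : (Complex.I * (↑(Real.pi / 2) : ℂ) * (-Complex.I) ^ nu ζ α) • Spinor ζ α
        = ((↑(Real.pi / 2) : ℂ) * Complex.I) • A := by
      rw [hAdef, smul_smul]
      ring_nf
    rw [harg, exp_smul_of_mul_self_eq_one A hAA]
    rw [← Complex.ofReal_cos, ← Complex.ofReal_sin, Real.cos_pi_div_two,
      Real.sin_pi_div_two]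
    simp
  -- conjugate transpose of the rotation
  have hAH : Aᴴ = A := by
    rw [hAdef, Matrix.conjTranspose_smul, Spinor_conjTranspose, sgn_dotp_self, smul_smul]
    congr 1
    rw [star_pow, star_neg, Complex.star_def, Complex.conj_I, ← mul_pow]
    congr 1
    ring
  have hRH : (sRot ζ α (Real.pi / 2))ᴴ = (-Complex.I) • A := by
    rw [hR, Matrix.conjTranspose_smul, hAH, Complex.star_def, Complex.conj_I]
  -- anticommutation
  have hAB : A * B = -(B * A) := by
    rw [hAdef, hBdef, Matrix.smul_mul, Matrix.mul_smul, Matrix.smul_mul, Matrix.mul_smul,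
      Spinor_mul, Spinor_mul, smul_smul, smul_smul, smul_smul, smul_smul]
    rw [add_comm η ζ, add_comm β α]
    rw [sgn_eq_neg_of_add_eq_one h]
    simp only [neg_smul, smul_neg, mul_neg, neg_neg]
    congr 1
    ring
  rw [hRH, hR]
  calc (-Complex.I • A) * B * (Complex.I • A)
      = (-Complex.I * Complex.I) • (A * B * A) := by
        rw [Matrix.smul_mul, Matrix.smul_mul, Matrix.mul_smul, smul_smul]
    _ = A * B * A := by
        rw [neg_mul, Complex.I_mul_I, neg_neg, one_smul]
    _ = -(B * (A * A)) := by rw [hAB, Matrix.neg_mul, Matrix.mul_assoc]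
    _ = -B := by rw [hAA, Matrix.mul_one]
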